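/- Let α ∈ (0,1) ∪ (1,2), let ρ and σ be quantum states on ℂ^d with supp(ρ) = supp(σ), let ν > 0, and let m ≥ 1, t₁,…,t_m ∈ [0,1], w₁,…,w_m > 0 be such that h_m(x) := 1 + (sin(απ)/π)·Σ_{j=1}^m w_j f_{t_j}(x) satisfies |x^{1−α} − h_m(x)| ≤ |1−α|·α·ν·(x−1)²/x for all x > 0. Then |Q_α(ρ‖σ) − D_{h_m}(ρ‖σ)| ≤ |α(1−α)|·ν·(Q₂(ρ‖σ) − 1), where D_{h_m}(ρ‖σ) = 1 + (sin(απ)/π)·Σ_{j=1}^m w_j·D_{f_{t_j}}(ρ‖σ), Q_α(ρ‖σ) = tr[ρ^α σ^{1−α}] (matrix powers by functional calculus on the support), and Q₂(ρ‖σ) = tr[ρ² σ⁺] with σ⁺ the Moore–Penrose pseudo-inverse of σ. -/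

import Mathlib

noncomputable section

namespace QRE

open scoped ComplexOrder

open Matrix

variable {d : ℕ}

/-- The rank-one projector `|u⟩⟨u|` associated with a vector `u ∈ ℂ^d`. -/
def rankOne (u : EuclideanSpace ℂ (Fin d)) : Matrix (Fin d) (Fin d) ℂ :=
  Matrix.of fun i j => u i * (starRingEnd ℂ) (u j)

/-- Functional calculus on the support of a Hermitian matrix: apply `g` to the
positive eigenvalues, and `0` to the rest. -/
def matFun (g : ℝ → ℝ) {A : Matrix (Fin d) (Fin d) ℂ} (hA : A.IsHermitian) :
    Matrix (Fin d) (Fin d) ℂ :=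
  ∑ j, (if 0 < hA.eigenvalues j then (g (hA.eigenvalues j) : ℂ) else 0) •
    rankOne (hA.eigenvectorBasis j)

/-- The orthogonal projection onto the support (column space) of a Hermitian matrix. -/
def suppProj {A : Matrix (Fin d) (Fin d) ℂ} (hA : A.IsHermitian) :
    Matrix (Fin d) (Fin d) ℂ :=
  matFun (fun _ => 1) hA

/-- The standard quantum `f`-divergence (for `supp ρ ⊆ supp σ`, where the `f(0⁺)` term
vanishes): `D_f(ρ‖σ) = Σ_{j : η_j > 0} Σ_{k : μ_k > 0} η_j f(μ_k/η_j) tr[P_j Q_k]`. -/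
def Df (f : ℝ → ℝ) {ρ σ : Matrix (Fin d) (Fin d) ℂ}
    (hρ : ρ.IsHermitian) (hσ : σ.IsHermitian) : ℝ :=
  ∑ j, ∑ k,
    if 0 < hρ.eigenvalues j ∧ 0 < hσ.eigenvalues k then
      hρ.eigenvalues j * f (hσ.eigenvalues k / hρ.eigenvalues j) *
        (Matrix.trace (rankOne (hρ.eigenvectorBasis j) *
          rankOne (hσ.eigenvectorBasis k))).re
    else 0

/-- `f_t(x) = (x-1)/(t(x-1)+1)`. -/
def ft (t x : ℝ) : ℝ := (x - 1) / (t * (x - 1) + 1)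

/-- A quantum state: positive semidefinite with unit trace. -/
def IsState (ρ : Matrix (Fin d) (Fin d) ℂ) : Prop := ρ.PosSemidef ∧ ρ.trace = 1

/-- The Umegaki relative entropy `tr[ρ (log₂ ρ − log₂ σ)]` (logs on the supports). -/
def relEnt {ρ σ : Matrix (Fin d) (Fin d) ℂ} (hρ : ρ.IsHermitian) (hσ : σ.IsHermitian) : ℝ :=
  (Matrix.trace (ρ * (matFun (Real.logb 2) hρ - matFun (Real.logb 2) hσ))).re

/-- `Q_α(ρ‖σ) = tr[ρ^α σ^{1-α}]`, matrix powers by functional calculus on the support. -/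
def Qalpha (α : ℝ) {ρ σ : Matrix (Fin d) (Fin d) ℂ}
    (hρ : ρ.IsHermitian) (hσ : σ.IsHermitian) : ℝ :=
  (Matrix.trace (matFun (fun y => y ^ α) hρ * matFun (fun y => y ^ (1 - α)) hσ)).re

/-- `Q₀(ρ‖σ) = tr[ρ⁰ σ]`. -/
def Qzero {ρ : Matrix (Fin d) (Fin d) ℂ} (hρ : ρ.IsHermitian)
    (σ : Matrix (Fin d) (Fin d) ℂ) : ℝ :=
  (Matrix.trace (suppProj hρ * σ)).re

/-- `Q₂(ρ‖σ) = tr[ρ² σ⁺]`, with `σ⁺` the Moore–Penrose pseudo-inverse of `σ`. -/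
def Qtwo (ρ : Matrix (Fin d) (Fin d) ℂ) {σ : Matrix (Fin d) (Fin d) ℂ}
    (hσ : σ.IsHermitian) : ℝ :=
  (Matrix.trace (ρ * ρ * matFun (fun y => y⁻¹) hσ)).re

lemma trace_rankOne_mul (u v : EuclideanSpace ℂ (Fin d)) :
    Matrix.trace (rankOne u * rankOne v) = inner (𝕜 := ℂ) u v * inner (𝕜 := ℂ) v u := by
  simp only [Matrix.trace, Matrix.diag, Matrix.mul_apply, rankOne, Matrix.of_apply,
    PiLp.inner_apply, RCLike.inner_apply, Finset.sum_mul, Finset.mul_sum]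
  exact Finset.sum_congr rfl fun i _ => Finset.sum_congr rfl fun j _ => by ring

lemma trace_rankOne_mul_eq (u v : EuclideanSpace ℂ (Fin d)) :
    Matrix.trace (rankOne u * rankOne v) = (Complex.normSq (inner (𝕜 := ℂ) u v) : ℂ) := by
  rw [trace_rankOne_mul]
  conv_lhs => rw [show (inner (𝕜 := ℂ) v u) = (starRingEnd ℂ) (inner (𝕜 := ℂ) u v) from
    (inner_conj_symm v u).symm]
  exact Complex.mul_conj _

lemma re_trace_rankOne_mul (u v : EuclideanSpace ℂ (Fin d)) :
    (Matrix.trace (rankOne u * rankOne v)).re = Complex.normSq (inner (𝕜 := ℂ) u v) := by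
  rw [trace_rankOne_mul_eq]; exact Complex.ofReal_re _

lemma re_trace_rankOne_mul_nonneg (u v : EuclideanSpace ℂ (Fin d)) :
    0 ≤ (Matrix.trace (rankOne u * rankOne v)).re := by
  rw [re_trace_rankOne_mul]; exact Complex.normSq_nonneg _

lemma spectral_sum {A : Matrix (Fin d) (Fin d) ℂ} (hA : A.IsHermitian) :
    A = ∑ j, (hA.eigenvalues j : ℂ) • rankOne (hA.eigenvectorBasis j) := by
  conv_lhs => rw [hA.spectral_theorem]
  ext i l
  simp [Matrix.mul_apply, Matrix.diagonal, Matrix.sum_apply, rankOne, conjTranspose_apply,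
    Finset.sum_ite_eq, mul_comm, mul_assoc, mul_left_comm]

lemma trace_rankOne (u : EuclideanSpace ℂ (Fin d)) :
    Matrix.trace (rankOne u) = (‖u‖ ^ 2 : ℝ) := by
  have : ((‖u‖ ^ 2 : ℝ) : ℂ) = inner (𝕜 := ℂ) u u := by
    rw [inner_self_eq_norm_sq_to_K (𝕜 := ℂ) u]; norm_cast
  rw [this]
  simp only [Matrix.trace, Matrix.diag, rankOne, Matrix.of_apply, PiLp.inner_apply, RCLike.inner_apply]

lemma rankOne_mul_rankOne (u v : EuclideanSpace ℂ (Fin d)) :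
    rankOne u * rankOne v =
      (inner (𝕜 := ℂ) u v : ℂ) • Matrix.of fun i l => u i * (starRingEnd ℂ) (v l) := by
  ext i l
  simp only [Matrix.mul_apply, rankOne, Matrix.of_apply, Matrix.smul_apply, smul_eq_mul,
    PiLp.inner_apply, RCLike.inner_apply, Finset.sum_mul]
  exact Finset.sum_congr rfl fun m _ => by ring

lemma trace_sum_smul_mul (a b : Fin d → ℂ) (u v : Fin d → EuclideanSpace ℂ (Fin d)) :
    Matrix.trace ((∑ j, a j • rankOne (u j)) * (∑ k, b k • rankOne (v k))) =
      ∑ j, ∑ k, a j * b k * Matrix.trace (rankOne (u j) * rankOne (v k)) := by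
  rw [Finset.sum_mul_sum, Matrix.trace_sum]
  refine Finset.sum_congr rfl fun j _ => ?_
  rw [Matrix.trace_sum]
  refine Finset.sum_congr rfl fun k _ => ?_
  rw [smul_mul_assoc, mul_smul_comm, Matrix.trace_smul, Matrix.trace_smul]
  simp [mul_assoc]

lemma sum_normSq_inner (b : OrthonormalBasis (Fin d) ℂ (EuclideanSpace ℂ (Fin d)))
    (u : EuclideanSpace ℂ (Fin d)) :
    ∑ k, Complex.normSq (inner (𝕜 := ℂ) u (b k)) = ‖u‖ ^ 2 := by
  have h := b.sum_inner_mul_inner u u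
  have h2 : ∀ k, inner (𝕜 := ℂ) u (b k) * inner (𝕜 := ℂ) (b k) u
      = (Complex.normSq (inner (𝕜 := ℂ) u (b k)) : ℂ) := by
    intro k
    rw [← inner_conj_symm (b k) u, Complex.mul_conj]
  rw [Finset.sum_congr rfl fun k _ => h2 k] at h
  have h3 : ((∑ k, Complex.normSq (inner (𝕜 := ℂ) u (b k)) : ℝ) : ℂ) = ((‖u‖ ^ 2 : ℝ) : ℂ) := by
    push_cast
    rw [h, inner_self_eq_norm_sq_to_K]
    norm_cast
  exact_mod_cast h3

lemma inner_eigvec_eq_zero {ρ σ : Matrix (Fin d) (Fin d) ℂ}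
    (hρ : ρ.IsHermitian) (hσP : σ.PosSemidef)
    (hsupp : LinearMap.range ρ.mulVecLin = LinearMap.range σ.mulVecLin)
    {j k : Fin d} (hj : 0 < hρ.eigenvalues j) (hk : ¬ 0 < hσP.1.eigenvalues k) :
    inner (𝕜 := ℂ) (hρ.eigenvectorBasis j) (hσP.1.eigenvectorBasis k) = 0 := by
  have hu : (⇑(hρ.eigenvectorBasis j) : Fin d → ℂ) ∈ LinearMap.range σ.mulVecLin := by
    rw [← hsupp]
    refine ⟨(hρ.eigenvalues j : ℂ)⁻¹ • ⇑(hρ.eigenvectorBasis j), ?_⟩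
    rw [Matrix.mulVecLin_apply, Matrix.mulVec_smul, hρ.mulVec_eigenvectorBasis]
    funext i
    simp only [Pi.smul_apply, smul_eq_mul, Complex.real_smul]
    field_simp
  obtain ⟨x, hx⟩ := hu
  rw [Matrix.mulVecLin_apply] at hx
  have hev : hσP.1.eigenvalues k = 0 :=
    le_antisymm (not_lt.1 hk) (hσP.eigenvalues_nonneg k)
  have hσv : σ *ᵥ ⇑(hσP.1.eigenvectorBasis k) = 0 := by
    rw [hσP.1.mulVec_eigenvectorBasis, hev, zero_smul]
  have : inner (𝕜 := ℂ) (hρ.eigenvectorBasis j) (hσP.1.eigenvectorBasis k)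
      = star (σ *ᵥ x) ⬝ᵥ ⇑(hσP.1.eigenvectorBasis k) := by
    rw [hx]
    simp [PiLp.inner_apply, RCLike.inner_apply, dotProduct, Pi.star_apply, mul_comm]
  rw [this, Matrix.star_mulVec, hσP.1.eq, ← Matrix.dotProduct_mulVec, hσv,
    dotProduct_zero]

/-- Restricted Parseval for an eigenvector of `ρ` with positive eigenvalue. -/
lemma sum_c_right {ρ σ : Matrix (Fin d) (Fin d) ℂ}
    (hρ : ρ.IsHermitian) (hσP : σ.PosSemidef)
    (hsupp : LinearMap.range ρ.mulVecLin = LinearMap.range σ.mulVecLin)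
    {j : Fin d} (hj : 0 < hρ.eigenvalues j) :
    ∑ k, (if 0 < hσP.1.eigenvalues k then
        (Matrix.trace (rankOne (hρ.eigenvectorBasis j) *
          rankOne (hσP.1.eigenvectorBasis k))).re else 0) = 1 := by
  have : ∀ k, (if 0 < hσP.1.eigenvalues k then
      (Matrix.trace (rankOne (hρ.eigenvectorBasis j) *
        rankOne (hσP.1.eigenvectorBasis k))).re else 0)
      = Complex.normSq (inner (𝕜 := ℂ) (hρ.eigenvectorBasis j) (hσP.1.eigenvectorBasis k)) := by
    intro k
    by_cases hk : 0 < hσP.1.eigenvalues k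
    · rw [if_pos hk, re_trace_rankOne_mul]
    · rw [if_neg hk, inner_eigvec_eq_zero hρ hσP hsupp hj hk, Complex.normSq_zero]
  rw [Finset.sum_congr rfl fun k _ => this k, sum_normSq_inner]
  rw [hρ.eigenvectorBasis.orthonormal.1 j]
  norm_num

/-- Restricted Parseval for an eigenvector of `σ` with positive eigenvalue. -/
lemma sum_c_left {ρ σ : Matrix (Fin d) (Fin d) ℂ}
    (hρP : ρ.PosSemidef) (hσ : σ.IsHermitian)
    (hsupp : LinearMap.range ρ.mulVecLin = LinearMap.range σ.mulVecLin)
    {k : Fin d} (hk : 0 < hσ.eigenvalues k) :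
    ∑ j, (if 0 < hρP.1.eigenvalues j then
        (Matrix.trace (rankOne (hρP.1.eigenvectorBasis j) *
          rankOne (hσ.eigenvectorBasis k))).re else 0) = 1 := by
  have : ∀ j, (if 0 < hρP.1.eigenvalues j then
      (Matrix.trace (rankOne (hρP.1.eigenvectorBasis j) *
        rankOne (hσ.eigenvectorBasis k))).re else 0)
      = Complex.normSq (inner (𝕜 := ℂ) (hσ.eigenvectorBasis k) (hρP.1.eigenvectorBasis j)) := by
    intro j
    by_cases hj : 0 < hρP.1.eigenvalues j
    · rw [if_pos hj, re_trace_rankOne_mul, ← inner_conj_symm (hρP.1.eigenvectorBasis j),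
        Complex.normSq_conj]
    · rw [if_neg hj, inner_eigvec_eq_zero hσ hρP hsupp.symm hk hj, Complex.normSq_zero]
  rw [Finset.sum_congr rfl fun j _ => this j, sum_normSq_inner]
  rw [hσ.eigenvectorBasis.orthonormal.1 k]
  norm_num

lemma sum_eigenvalues_eq_one {ρ : Matrix (Fin d) (Fin d) ℂ}
    (hρ : ρ.IsHermitian) (h1 : ρ.trace = 1) : ∑ j, hρ.eigenvalues j = 1 := by
  have := congrArg Matrix.trace (spectral_sum hρ)
  rw [h1, Matrix.trace_sum] at this
  have h2 : ∀ j, Matrix.trace ((hρ.eigenvalues j : ℂ) • rankOne (hρ.eigenvectorBasis j))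
      = (hρ.eigenvalues j : ℂ) := by
    intro j
    rw [Matrix.trace_smul, trace_rankOne, hρ.eigenvectorBasis.orthonormal.1 j]
    norm_num
  rw [Finset.sum_congr rfl fun j _ => h2 j] at this
  exact_mod_cast this.symm

lemma sq_spectral {A : Matrix (Fin d) (Fin d) ℂ} (hA : A.IsHermitian) :
    A * A = ∑ j, ((hA.eigenvalues j : ℂ)) ^ 2 • rankOne (hA.eigenvectorBasis j) := by
  conv_lhs => rw [spectral_sum hA]
  rw [Finset.sum_mul_sum]
  refine Finset.sum_congr rfl fun j _ => ?_
  rw [Finset.sum_eq_single j]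
  · rw [smul_mul_assoc, mul_smul_comm, rankOne_mul_rankOne,
      orthonormal_iff_ite.mp hA.eigenvectorBasis.orthonormal j j, if_pos rfl, one_smul,
      smul_smul, ← sq]
    rfl
  · intro k _ hk
    rw [smul_mul_assoc, mul_smul_comm, rankOne_mul_rankOne]
    rw [orthonormal_iff_ite.mp hA.eigenvectorBasis.orthonormal j k]
    simp [Ne.symm hk]
  · intro h; exact absurd (Finset.mem_univ j) h

lemma re_trace_matFun_mul (g h : ℝ → ℝ) {ρ σ : Matrix (Fin d) (Fin d) ℂ}
    (hρ : ρ.IsHermitian) (hσ : σ.IsHermitian) :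
    (Matrix.trace (matFun g hρ * matFun h hσ)).re =
      ∑ j, ∑ k, (if 0 < hρ.eigenvalues j ∧ 0 < hσ.eigenvalues k then
        g (hρ.eigenvalues j) * h (hσ.eigenvalues k) *
          (Matrix.trace (rankOne (hρ.eigenvectorBasis j) *
            rankOne (hσ.eigenvectorBasis k))).re else 0) := by
  rw [matFun, matFun, trace_sum_smul_mul, Complex.re_sum]
  refine Finset.sum_congr rfl fun j _ => ?_
  rw [Complex.re_sum]
  refine Finset.sum_congr rfl fun k _ => ?_
  rw [trace_rankOne_mul_eq]
  by_cases hj : 0 < hρ.eigenvalues j <;> by_cases hk : 0 < hσ.eigenvalues k <;>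
    simp [hj, hk, ← Complex.ofReal_mul]

lemma re_trace_sq_mul_matFun (h : ℝ → ℝ) {ρ σ : Matrix (Fin d) (Fin d) ℂ}
    (hρ : ρ.IsHermitian) (hσ : σ.IsHermitian) :
    (Matrix.trace (ρ * ρ * matFun h hσ)).re =
      ∑ j, ∑ k, (if 0 < hσ.eigenvalues k then
        hρ.eigenvalues j ^ 2 * h (hσ.eigenvalues k) *
          (Matrix.trace (rankOne (hρ.eigenvectorBasis j) *
            rankOne (hσ.eigenvectorBasis k))).re else 0) := by
  conv_lhs => rw [sq_spectral hρ]
  rw [matFun, trace_sum_smul_mul, Complex.re_sum]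
  refine Finset.sum_congr rfl fun j _ => ?_
  rw [Complex.re_sum]
  refine Finset.sum_congr rfl fun k _ => ?_
  rw [trace_rankOne_mul_eq]
  by_cases hk : 0 < hσ.eigenvalues k <;>
    simp [hk, ← Complex.ofReal_mul, ← Complex.ofReal_pow]

lemma sum1 {ρ σ : Matrix (Fin d) (Fin d) ℂ} (hρP : ρ.PosSemidef) (hσP : σ.PosSemidef)
    (hsupp : LinearMap.range ρ.mulVecLin = LinearMap.range σ.mulVecLin)
    (htr : ρ.trace = 1) :
    ∑ j, ∑ k, (if 0 < hρP.1.eigenvalues j ∧ 0 < hσP.1.eigenvalues k then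
      hρP.1.eigenvalues j * (Matrix.trace (rankOne (hρP.1.eigenvectorBasis j) *
        rankOne (hσP.1.eigenvectorBasis k))).re else 0) = 1 := by
  have hrow : ∀ j, ∑ k, (if 0 < hρP.1.eigenvalues j ∧ 0 < hσP.1.eigenvalues k then
      hρP.1.eigenvalues j * (Matrix.trace (rankOne (hρP.1.eigenvectorBasis j) *
        rankOne (hσP.1.eigenvectorBasis k))).re else 0)
      = (if 0 < hρP.1.eigenvalues j then hρP.1.eigenvalues j else 0) := by
    intro j
    by_cases hj : 0 < hρP.1.eigenvalues j
    · rw [if_pos hj]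
      have : ∀ k, (if 0 < hρP.1.eigenvalues j ∧ 0 < hσP.1.eigenvalues k then
          hρP.1.eigenvalues j * (Matrix.trace (rankOne (hρP.1.eigenvectorBasis j) *
            rankOne (hσP.1.eigenvectorBasis k))).re else 0)
          = hρP.1.eigenvalues j * (if 0 < hσP.1.eigenvalues k then
            (Matrix.trace (rankOne (hρP.1.eigenvectorBasis j) *
              rankOne (hσP.1.eigenvectorBasis k))).re else 0) := by
        intro k
        by_cases hk : 0 < hσP.1.eigenvalues k <;> simp [hj, hk]
      rw [Finset.sum_congr rfl fun k _ => this k, ← Finset.mul_sum,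
        sum_c_right hρP.1 hσP hsupp hj, mul_one]
    · simp [hj]
  rw [Finset.sum_congr rfl fun j _ => hrow j]
  have : ∀ j, (if 0 < hρP.1.eigenvalues j then hρP.1.eigenvalues j else 0)
      = hρP.1.eigenvalues j := by
    intro j
    by_cases hj : 0 < hρP.1.eigenvalues j
    · rw [if_pos hj]
    · rw [if_neg hj, eq_comm, le_antisymm (not_lt.1 hj) (hρP.eigenvalues_nonneg j)]
  rw [Finset.sum_congr rfl fun j _ => this j, sum_eigenvalues_eq_one hρP.1 htr]

lemma sum2 {ρ σ : Matrix (Fin d) (Fin d) ℂ} (hρP : ρ.PosSemidef) (hσP : σ.PosSemidef)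
    (hsupp : LinearMap.range ρ.mulVecLin = LinearMap.range σ.mulVecLin)
    (htr : σ.trace = 1) :
    ∑ j, ∑ k, (if 0 < hρP.1.eigenvalues j ∧ 0 < hσP.1.eigenvalues k then
      hσP.1.eigenvalues k * (Matrix.trace (rankOne (hρP.1.eigenvectorBasis j) *
        rankOne (hσP.1.eigenvectorBasis k))).re else 0) = 1 := by
  rw [Finset.sum_comm]
  have hrow : ∀ k, ∑ j, (if 0 < hρP.1.eigenvalues j ∧ 0 < hσP.1.eigenvalues k then
      hσP.1.eigenvalues k * (Matrix.trace (rankOne (hρP.1.eigenvectorBasis j) *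
        rankOne (hσP.1.eigenvectorBasis k))).re else 0)
      = (if 0 < hσP.1.eigenvalues k then hσP.1.eigenvalues k else 0) := by
    intro k
    by_cases hk : 0 < hσP.1.eigenvalues k
    · rw [if_pos hk]
      have : ∀ j, (if 0 < hρP.1.eigenvalues j ∧ 0 < hσP.1.eigenvalues k then
          hσP.1.eigenvalues k * (Matrix.trace (rankOne (hρP.1.eigenvectorBasis j) *
            rankOne (hσP.1.eigenvectorBasis k))).re else 0)
          = hσP.1.eigenvalues k * (if 0 < hρP.1.eigenvalues j then
            (Matrix.trace (rankOne (hρP.1.eigenvectorBasis j) *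
              rankOne (hσP.1.eigenvectorBasis k))).re else 0) := by
        intro j
        by_cases hj : 0 < hρP.1.eigenvalues j <;> simp [hj, hk]
      rw [Finset.sum_congr rfl fun j _ => this j, ← Finset.mul_sum,
        sum_c_left hρP hσP.1 hsupp hk, mul_one]
    · simp [hk]
  rw [Finset.sum_congr rfl fun k _ => hrow k]
  have : ∀ k, (if 0 < hσP.1.eigenvalues k then hσP.1.eigenvalues k else 0)
      = hσP.1.eigenvalues k := by
    intro k
    by_cases hk : 0 < hσP.1.eigenvalues k
    · rw [if_pos hk]
    · rw [if_neg hk, eq_comm, le_antisymm (not_lt.1 hk) (hσP.eigenvalues_nonneg k)]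
  rw [Finset.sum_congr rfl fun k _ => this k, sum_eigenvalues_eq_one hσP.1 htr]

lemma key {d : ℕ} (η μ : Fin d → ℝ) (c : Fin d → Fin d → ℝ) (hc : ∀ j k, 0 ≤ c j k)
    (F : ℝ → ℝ) (α ν : ℝ)
    (happ : ∀ x > (0:ℝ), |x ^ (1-α) - F x| ≤ |1-α| * α * ν * (x-1)^2 / x)
    (S1 : ∑ j, ∑ k, (if 0 < η j ∧ 0 < μ k then η j * c j k else 0) = 1)
    (S2 : ∑ j, ∑ k, (if 0 < η j ∧ 0 < μ k then μ k * c j k else 0) = 1)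
    (Q2 : ℝ)
    (S3 : ∑ j, ∑ k, (if 0 < η j ∧ 0 < μ k then η j ^ 2 / μ k * c j k else 0) = Q2)
    (QA : ℝ)
    (hQA : QA = ∑ j, ∑ k, (if 0 < η j ∧ 0 < μ k then
      η j * (μ k / η j) ^ (1-α) * c j k else 0))
    (D : ℝ)
    (hD : D = ∑ j, ∑ k, (if 0 < η j ∧ 0 < μ k then η j * F (μ k / η j) * c j k else 0)) :
    |QA - D| ≤ |1-α| * α * ν * (Q2 - 1) := by
  have step1 : QA - D = ∑ j, ∑ k, (if 0 < η j ∧ 0 < μ k then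
      η j * ((μ k / η j) ^ (1-α) - F (μ k / η j)) * c j k else 0) := by
    rw [hQA, hD, ← Finset.sum_sub_distrib]
    refine Finset.sum_congr rfl fun j _ => ?_
    rw [← Finset.sum_sub_distrib]
    refine Finset.sum_congr rfl fun k _ => ?_
    split_ifs with h
    · ring
    · ring
  rw [step1]
  calc |∑ j, ∑ k, (if 0 < η j ∧ 0 < μ k then
      η j * ((μ k / η j) ^ (1-α) - F (μ k / η j)) * c j k else 0)|
      ≤ ∑ j, ∑ k, |if 0 < η j ∧ 0 < μ k then
        η j * ((μ k / η j) ^ (1-α) - F (μ k / η j)) * c j k else 0| := by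
        refine (Finset.abs_sum_le_sum_abs _ _).trans ?_
        exact Finset.sum_le_sum fun j _ => Finset.abs_sum_le_sum_abs _ _
    _ ≤ ∑ j, ∑ k, (if 0 < η j ∧ 0 < μ k then
        (|1-α| * α * ν) * ((μ k - 2 * η j + η j ^ 2 / μ k) * c j k) else 0) := by
        refine Finset.sum_le_sum fun j _ => Finset.sum_le_sum fun k _ => ?_
        split_ifs with h
        · obtain ⟨hj, hk⟩ := h
          have hx : (0:ℝ) < μ k / η j := div_pos hk hj
          have hb := happ _ hx
          have key2 : η j * (|1-α| * α * ν * (μ k / η j - 1)^2 / (μ k / η j)) * c j k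
              = (|1-α| * α * ν) * ((μ k - 2 * η j + η j ^ 2 / μ k) * c j k) := by
            field_simp
            ring
          calc |η j * ((μ k / η j) ^ (1-α) - F (μ k / η j)) * c j k|
              = η j * |(μ k / η j) ^ (1-α) - F (μ k / η j)| * c j k := by
                rw [abs_mul, abs_mul, abs_of_pos hj, abs_of_nonneg (hc j k)]
            _ ≤ η j * (|1-α| * α * ν * (μ k / η j - 1)^2 / (μ k / η j)) * c j k := by
                apply mul_le_mul_of_nonneg_right _ (hc j k)
                exact mul_le_mul_of_nonneg_left hb (le_of_lt hj)
            _ = _ := key2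
        · simp
    _ = (|1-α| * α * ν) * (Q2 - 1) := by
        have expand : ∀ j k, (if 0 < η j ∧ 0 < μ k then
            (|1-α| * α * ν) * ((μ k - 2 * η j + η j ^ 2 / μ k) * c j k) else 0)
            = (|1-α| * α * ν) * ((if 0 < η j ∧ 0 < μ k then μ k * c j k else 0)
              - 2 * (if 0 < η j ∧ 0 < μ k then η j * c j k else 0)
              + (if 0 < η j ∧ 0 < μ k then η j ^ 2 / μ k * c j k else 0)) := by
          intro j k
          split_ifs with h
          · ring
          · ring
        calc ∑ j, ∑ k, (if 0 < η j ∧ 0 < μ k then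
            (|1-α| * α * ν) * ((μ k - 2 * η j + η j ^ 2 / μ k) * c j k) else 0)
            = (|1-α| * α * ν) * (∑ j, ∑ k, ((if 0 < η j ∧ 0 < μ k then μ k * c j k else 0)
              - 2 * (if 0 < η j ∧ 0 < μ k then η j * c j k else 0)
              + (if 0 < η j ∧ 0 < μ k then η j ^ 2 / μ k * c j k else 0))) := by
              rw [Finset.mul_sum]
              refine Finset.sum_congr rfl fun j _ => ?_
              rw [Finset.mul_sum]
              exact Finset.sum_congr rfl fun k _ => expand j k
          _ = (|1-α| * α * ν) * (Q2 - 1) := by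
              congr 1
              have h4 : ∀ j, ∑ k, ((if 0 < η j ∧ 0 < μ k then μ k * c j k else 0)
                  - 2 * (if 0 < η j ∧ 0 < μ k then η j * c j k else 0)
                  + (if 0 < η j ∧ 0 < μ k then η j ^ 2 / μ k * c j k else 0))
                  = (∑ k, (if 0 < η j ∧ 0 < μ k then μ k * c j k else 0))
                    - 2 * (∑ k, (if 0 < η j ∧ 0 < μ k then η j * c j k else 0))
                    + (∑ k, (if 0 < η j ∧ 0 < μ k then η j ^ 2 / μ k * c j k else 0)) := by
                intro j
                rw [Finset.sum_add_distrib, Finset.sum_sub_distrib, Finset.mul_sum]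
              rw [Finset.sum_congr rfl fun j _ => h4 j, Finset.sum_add_distrib,
                Finset.sum_sub_distrib, ← Finset.mul_sum, S1, S2, S3]
              ring

/-- Quadrature error bound for the quasi-relative entropy:
`|Q_α(ρ‖σ) − D_{h_m}(ρ‖σ)| ≤ |α(1−α)| ν (Q₂(ρ‖σ) − 1)`. -/
theorem quadrature_error_Qalpha (α : ℝ)
    (hα : α ∈ Set.Ioo (0 : ℝ) 1 ∪ Set.Ioo (1 : ℝ) 2)
    (ρ σ : Matrix (Fin d) (Fin d) ℂ) (hρ : IsState ρ) (hσ : IsState σ)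
    (hsupp : LinearMap.range ρ.mulVecLin = LinearMap.range σ.mulVecLin)
    (ν : ℝ) (hν : 0 < ν)
    (m : ℕ) (hm : 1 ≤ m) (t w : Fin m → ℝ)
    (ht : ∀ j, t j ∈ Set.Icc (0 : ℝ) 1) (hw : ∀ j, 0 < w j)
    (happrox : ∀ x > (0 : ℝ),
      |x ^ (1 - α) -
          (1 + (Real.sin (α * Real.pi) / Real.pi) * ∑ j, w j * ft (t j) x)| ≤
        |1 - α| * α * ν * (x - 1) ^ 2 / x) :
    |Qalpha α hρ.1.1 hσ.1.1 -
        (1 + (Real.sin (α * Real.pi) / Real.pi) *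
          ∑ j, w j * Df (ft (t j)) hρ.1.1 hσ.1.1)| ≤
      |α * (1 - α)| * ν * (Qtwo ρ hσ.1.1 - 1) := by
  have hα0 : 0 < α := by
    rcases hα with h | h
    · exact h.1
    · exact lt_trans one_pos h.1
  have habs : |α * (1 - α)| = |1 - α| * α := by
    rw [abs_mul, abs_of_pos hα0, mul_comm]
  rw [habs]
  have hQA : Qalpha α hρ.1.1 hσ.1.1 = ∑ j, ∑ k,
      (if 0 < hρ.1.1.eigenvalues j ∧ 0 < hσ.1.1.eigenvalues k then
        hρ.1.1.eigenvalues j * (hσ.1.1.eigenvalues k / hρ.1.1.eigenvalues j) ^ (1 - α) *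
          (Matrix.trace (rankOne (hρ.1.1.eigenvectorBasis j) *
            rankOne (hσ.1.1.eigenvectorBasis k))).re else 0) := by
    simp only [Qalpha]
    rw [re_trace_matFun_mul]
    refine Finset.sum_congr rfl fun j _ => Finset.sum_congr rfl fun k _ => ?_
    by_cases h : 0 < hρ.1.1.eigenvalues j ∧ 0 < hσ.1.1.eigenvalues k
    · rw [if_pos h, if_pos h]
      obtain ⟨hj, hk⟩ := h
      congr 1
      rw [Real.div_rpow hk.le hj.le]
      have hne : hρ.1.1.eigenvalues j ^ (1 - α) ≠ 0 := (Real.rpow_pos_of_pos hj _).ne'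
      rw [mul_div_assoc', eq_div_iff hne,
        mul_right_comm (hρ.1.1.eigenvalues j ^ α), ← Real.rpow_add hj]
      have e : α + (1 - α) = 1 := by ring
      rw [e, Real.rpow_one]
    · rw [if_neg h, if_neg h]
  have hS3 : ∑ j, ∑ k,
      (if 0 < hρ.1.1.eigenvalues j ∧ 0 < hσ.1.1.eigenvalues k then
        hρ.1.1.eigenvalues j ^ 2 / hσ.1.1.eigenvalues k *
          (Matrix.trace (rankOne (hρ.1.1.eigenvectorBasis j) *
            rankOne (hσ.1.1.eigenvectorBasis k))).re else 0) = Qtwo ρ hσ.1.1 := by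
    simp only [Qtwo]
    rw [re_trace_sq_mul_matFun (fun y => y⁻¹) hρ.1.1 hσ.1.1]
    refine Finset.sum_congr rfl fun j _ => Finset.sum_congr rfl fun k _ => ?_
    by_cases hj : 0 < hρ.1.1.eigenvalues j
    · by_cases hk : 0 < hσ.1.1.eigenvalues k <;> simp [hj, hk, div_eq_mul_inv]
    · have h0 : hρ.1.1.eigenvalues j = 0 :=
        le_antisymm (not_lt.1 hj) (hρ.1.eigenvalues_nonneg j)
      by_cases hk : 0 < hσ.1.1.eigenvalues k <;> simp [hj, hk, h0]
  have hD : (1 + (Real.sin (α * Real.pi) / Real.pi) *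
      ∑ i, w i * Df (ft (t i)) hρ.1.1 hσ.1.1) = ∑ j, ∑ k,
      (if 0 < hρ.1.1.eigenvalues j ∧ 0 < hσ.1.1.eigenvalues k then
        hρ.1.1.eigenvalues j * (1 + (Real.sin (α * Real.pi) / Real.pi) *
          ∑ i, w i * ft (t i) (hσ.1.1.eigenvalues k / hρ.1.1.eigenvalues j)) *
          (Matrix.trace (rankOne (hρ.1.1.eigenvectorBasis j) *
            rankOne (hσ.1.1.eigenvectorBasis k))).re else 0) := by
    rw [eq_comm]
    have hsplit : ∀ j k, (if 0 < hρ.1.1.eigenvalues j ∧ 0 < hσ.1.1.eigenvalues k then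
        hρ.1.1.eigenvalues j * (1 + (Real.sin (α * Real.pi) / Real.pi) *
          ∑ i, w i * ft (t i) (hσ.1.1.eigenvalues k / hρ.1.1.eigenvalues j)) *
          (Matrix.trace (rankOne (hρ.1.1.eigenvectorBasis j) *
            rankOne (hσ.1.1.eigenvectorBasis k))).re else 0)
        = (if 0 < hρ.1.1.eigenvalues j ∧ 0 < hσ.1.1.eigenvalues k then
            hρ.1.1.eigenvalues j * (Matrix.trace (rankOne (hρ.1.1.eigenvectorBasis j) *
              rankOne (hσ.1.1.eigenvectorBasis k))).re else 0)
          + ∑ i, (Real.sin (α * Real.pi) / Real.pi) * w i *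
            (if 0 < hρ.1.1.eigenvalues j ∧ 0 < hσ.1.1.eigenvalues k then
              hρ.1.1.eigenvalues j *
                ft (t i) (hσ.1.1.eigenvalues k / hρ.1.1.eigenvalues j) *
                (Matrix.trace (rankOne (hρ.1.1.eigenvectorBasis j) *
                  rankOne (hσ.1.1.eigenvectorBasis k))).re else 0) := by
      intro j k
      by_cases h : 0 < hρ.1.1.eigenvalues j ∧ 0 < hσ.1.1.eigenvalues k
      · simp only [if_pos h]
        rw [show ∑ i, (Real.sin (α * Real.pi) / Real.pi) * w i *
            (hρ.1.1.eigenvalues j * ft (t i) (hσ.1.1.eigenvalues k / hρ.1.1.eigenvalues j) *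
              (Matrix.trace (rankOne (hρ.1.1.eigenvectorBasis j) *
                rankOne (hσ.1.1.eigenvectorBasis k))).re)
            = ((Real.sin (α * Real.pi) / Real.pi) *
                ∑ i, w i * ft (t i) (hσ.1.1.eigenvalues k / hρ.1.1.eigenvalues j)) *
              (hρ.1.1.eigenvalues j * (Matrix.trace (rankOne (hρ.1.1.eigenvectorBasis j) *
                rankOne (hσ.1.1.eigenvectorBasis k))).re) from by
          rw [Finset.mul_sum, Finset.sum_mul]
          exact Finset.sum_congr rfl fun i _ => by ring]
        ring
      · simp [h]
    rw [Finset.sum_congr rfl fun j _ => Finset.sum_congr rfl fun k _ => hsplit j k]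
    simp only [Finset.sum_add_distrib]
    rw [sum1 hρ.1 hσ.1 hsupp hρ.2]
    congr 1
    calc ∑ j, ∑ k, ∑ i, (Real.sin (α * Real.pi) / Real.pi) * w i *
          (if 0 < hρ.1.1.eigenvalues j ∧ 0 < hσ.1.1.eigenvalues k then
            hρ.1.1.eigenvalues j * ft (t i) (hσ.1.1.eigenvalues k / hρ.1.1.eigenvalues j) *
              (Matrix.trace (rankOne (hρ.1.1.eigenvectorBasis j) *
                rankOne (hσ.1.1.eigenvectorBasis k))).re else 0)
        = ∑ j, ∑ i, ∑ k, (Real.sin (α * Real.pi) / Real.pi) * w i *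
          (if 0 < hρ.1.1.eigenvalues j ∧ 0 < hσ.1.1.eigenvalues k then
            hρ.1.1.eigenvalues j * ft (t i) (hσ.1.1.eigenvalues k / hρ.1.1.eigenvalues j) *
              (Matrix.trace (rankOne (hρ.1.1.eigenvectorBasis j) *
                rankOne (hσ.1.1.eigenvectorBasis k))).re else 0) :=
          Finset.sum_congr rfl fun j _ => Finset.sum_comm
      _ = ∑ i, ∑ j, ∑ k, (Real.sin (α * Real.pi) / Real.pi) * w i *
          (if 0 < hρ.1.1.eigenvalues j ∧ 0 < hσ.1.1.eigenvalues k then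
            hρ.1.1.eigenvalues j * ft (t i) (hσ.1.1.eigenvalues k / hρ.1.1.eigenvalues j) *
              (Matrix.trace (rankOne (hρ.1.1.eigenvectorBasis j) *
                rankOne (hσ.1.1.eigenvectorBasis k))).re else 0) := Finset.sum_comm
      _ = (Real.sin (α * Real.pi) / Real.pi) * ∑ i, w i * Df (ft (t i)) hρ.1.1 hσ.1.1 := by
          rw [Finset.mul_sum]
          refine Finset.sum_congr rfl fun i _ => ?_
          simp only [Df]
          rw [show (Real.sin (α * Real.pi) / Real.pi) * (w i * ∑ j, ∑ k,
            (if 0 < hρ.1.1.eigenvalues j ∧ 0 < hσ.1.1.eigenvalues k then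
              hρ.1.1.eigenvalues j * ft (t i) (hσ.1.1.eigenvalues k / hρ.1.1.eigenvalues j) *
                (Matrix.trace (rankOne (hρ.1.1.eigenvectorBasis j) *
                  rankOne (hσ.1.1.eigenvectorBasis k))).re else 0))
            = (Real.sin (α * Real.pi) / Real.pi) * w i * ∑ j, ∑ k,
            (if 0 < hρ.1.1.eigenvalues j ∧ 0 < hσ.1.1.eigenvalues k then
              hρ.1.1.eigenvalues j * ft (t i) (hσ.1.1.eigenvalues k / hρ.1.1.eigenvalues j) *
                (Matrix.trace (rankOne (hρ.1.1.eigenvectorBasis j) *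
                  rankOne (hσ.1.1.eigenvectorBasis k))).re else 0) from by ring]
          rw [Finset.mul_sum]
          refine Finset.sum_congr rfl fun j _ => ?_
          rw [Finset.mul_sum]
  exact key hρ.1.1.eigenvalues hσ.1.1.eigenvalues
    (fun j k => (Matrix.trace (rankOne (hρ.1.1.eigenvectorBasis j) *
      rankOne (hσ.1.1.eigenvectorBasis k))).re)
    (fun j k => re_trace_rankOne_mul_nonneg _ _)
    (fun x => 1 + (Real.sin (α * Real.pi) / Real.pi) * ∑ i, w i * ft (t i) x) α ν
    happrox
    (sum1 hρ.1 hσ.1 hsupp hρ.2) (sum2 hρ.1 hσ.1 hsupp hσ.2)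
    (Qtwo ρ hσ.1.1) hS3 (Qalpha α hρ.1.1 hσ.1.1) hQA _ hD

end QRE
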